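/- Characterization of the vanishing of X(s): in the ADRIS setting with unique invariant state ρ^inv_s of the irreducible CPTP map L(s), the following are equivalent: (1) X(s) := U(s)(ρ^inv_s⊗ξ_s)U(s)* − ρ^inv_s⊗ξ_s = 0; (2) there exists a self-adjoint operator K_S(s) on H_S such that [K_S(s)⊗Id + Id⊗h_E(s), U(s)] = 0. Moreover, if either condition holds, the detailed balance relation holds: for all ρ ∈ B(H_S), (ρ^inv_s)^{1/2} L(s)*((ρ^inv_s)^{−1/2} ρ (ρ^inv_s)^{−1/2}) (ρ^inv_s)^{1/2} = Tr_E(U(s)*(ρ⊗ξ_s)U(s)), where L(s)* is the adjoint of L(s) with respect to the trace duality. -/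

import Mathlib

open Matrix Finset Set
open scoped Kronecker ComplexOrder ENNReal

namespace RISPaper

variable {nS nE N : Type*}

/-- Partial trace over the second (environment) factor. -/
noncomputable def ptraceE [Fintype nE] (A : Matrix (nS × nE) (nS × nE) ℂ) :
    Matrix nS nS ℂ := Matrix.of fun i j => ∑ k : nE, A (i, k) (j, k)

/-- Partial trace over the first (system) factor. -/
noncomputable def ptraceS [Fintype nS] (A : Matrix (nS × nE) (nS × nE) ℂ) :
    Matrix nE nE ℂ := Matrix.of fun i j => ∑ k : nS, A (k, i) (k, j)

/-- Logarithm of a Hermitian matrix, via the spectral decomposition (junk value `0`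
on non-Hermitian matrices; eigenvalue `0` contributes `Real.log 0 = 0`). -/
noncomputable def hlog [Fintype N] [DecidableEq N] (A : Matrix N N ℂ) : Matrix N N ℂ :=
  if hA : A.IsHermitian then
    (hA.eigenvectorUnitary : Matrix N N ℂ) *
      Matrix.diagonal (fun i => (Real.log (hA.eigenvalues i) : ℂ)) *
      (star (hA.eigenvectorUnitary : Matrix N N ℂ))
  else 0

/-- von Neumann entropy `S(η) = -Tr (η log η)`. -/
noncomputable def vnEntropy [Fintype N] [DecidableEq N] (A : Matrix N N ℂ) : ℝ :=
  (-(A * hlog A).trace).re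

/-- Relative entropy `S(η|ν) = Tr (η (log η - log ν))`. -/
noncomputable def relEntropy [Fintype N] [DecidableEq N] (A B : Matrix N N ℂ) : ℝ :=
  ((A * (hlog A - hlog B)).trace).re

/-- Gibbs state `exp(-βh)/Tr(exp(-βh))`. -/
noncomputable def gibbs [Fintype N] [DecidableEq N] (β : ℝ) (h : Matrix N N ℂ) : Matrix N N ℂ :=
  (NormedSpace.exp ((-β : ℂ) • h)).trace⁻¹ • NormedSpace.exp ((-β : ℂ) • h)

/-- A state: positive semidefinite with unit trace. -/
def IsState [Fintype N] (ρ : Matrix N N ℂ) : Prop := ρ.PosSemidef ∧ ρ.trace = 1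

/-- A faithful state: positive definite with unit trace. -/
def IsFaithfulState [Fintype N] (ρ : Matrix N N ℂ) : Prop := ρ.PosDef ∧ ρ.trace = 1

/-- Square root of a positive semidefinite matrix (the Mathlib definition of Dec 2024,
since removed). -/
noncomputable def _root_.Matrix.PosSemidef.sqrt {n 𝕜 : Type*} [Fintype n] [DecidableEq n]
    [RCLike 𝕜] {A : Matrix n n 𝕜} (hA : A.PosSemidef) : Matrix n n 𝕜 :=
  hA.1.eigenvectorUnitary.1 * diagonal ((↑) ∘ (√·) ∘ hA.1.eigenvalues) *
    (star hA.1.eigenvectorUnitary : Matrix n n 𝕜)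

/-- Trace norm `‖A‖₁ = Tr √(AᴴA)`. -/
noncomputable def traceNorm [Fintype N] [DecidableEq N] (A : Matrix N N ℂ) : ℝ :=
  ((Matrix.posSemidef_conjTranspose_mul_self A).sqrt).trace.re

/-- Operator (ℓ²→ℓ²) norm of a matrix. -/
noncomputable def opNorm [Fintype N] [DecidableEq N] (A : Matrix N N ℂ) : ℝ :=
  ‖LinearMap.toContinuousLinearMap (Matrix.toEuclideanLin A)‖

/-- Operator norm of a map on matrices, with respect to the trace norm. -/
noncomputable def mapTNorm [Fintype N] [DecidableEq N]
    (f : Matrix N N ℂ → Matrix N N ℂ) : ℝ :=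
  sSup ((fun A => traceNorm (f A)) '' {A | traceNorm A ≤ 1})

/-- The smallest point of the spectrum of a Hermitian matrix (junk value `0` otherwise). -/
noncomputable def infSpec [Fintype N] [DecidableEq N] [Nonempty N] (A : Matrix N N ℂ) : ℝ :=
  if hA : A.IsHermitian then ⨅ i, hA.eigenvalues i else 0

/-- Amplification `Φ ⊗ id_k` of a map on matrices. -/
noncomputable def amp [Fintype N] (Φ : Matrix N N ℂ → Matrix N N ℂ) (k : ℕ)
    (M : Matrix (N × Fin k) (N × Fin k) ℂ) : Matrix (N × Fin k) (N × Fin k) ℂ :=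
  Matrix.of fun p q => Φ (Matrix.of fun i j => M (i, p.2) (j, q.2)) p.1 q.1

/-- Complete positivity. -/
def IsCompletelyPositive [Fintype N] (Φ : Matrix N N ℂ → Matrix N N ℂ) : Prop :=
  ∀ (k : ℕ) (M : Matrix (N × Fin k) (N × Fin k) ℂ), M.PosSemidef → (amp Φ k M).PosSemidef

/-- Trace preservation. -/
def IsTracePreserving [Fintype N] (Φ : Matrix N N ℂ → Matrix N N ℂ) : Prop :=
  ∀ A, (Φ A).trace = A.trace

/-- CPTP (quantum channel). -/
def IsCPTP [Fintype N] (Φ : Matrix N N ℂ → Matrix N N ℂ) : Prop :=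
  IsCompletelyPositive Φ ∧ IsTracePreserving Φ

/-- Irreducibility of a map on matrices: the only invariant hereditary subalgebras are
trivial. -/
def IsIrreducible [Fintype N] [DecidableEq N] (Φ : Matrix N N ℂ → Matrix N N ℂ) : Prop :=
  ∀ p : Matrix N N ℂ, p.IsHermitian → p * p = p →
    (∀ A, Φ (p * A * p) = p * Φ (p * A * p) * p) → p = 0 ∨ p = 1

/-- The divided-difference kernel entering the Hessian of relative entropy. -/
noncomputable def ddKernel (x y : ℝ) : ℝ :=
  if x = y then 1 / (2 * x) else (Real.log x - Real.log y) / (2 * (x - y))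

/-- The quadratic form `F_η(A,B)` of the paper (second-order expansion of relative entropy
around the faithful state `η`), written via the eigendecomposition of `η`. -/
noncomputable def Fq [Fintype N] [DecidableEq N] (η A B : Matrix N N ℂ) : ℝ :=
  if hη : η.IsHermitian then
    (∑ a : N, ∑ b : N,
      (ddKernel (hη.eigenvalues a) (hη.eigenvalues b) : ℂ) *
        ((star (hη.eigenvectorUnitary : Matrix N N ℂ) * A *
            (hη.eigenvectorUnitary : Matrix N N ℂ)) b a *
         (star (hη.eigenvectorUnitary : Matrix N N ℂ) * B *
            (hη.eigenvectorUnitary : Matrix N N ℂ)) a b)).re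
  else 0


/-- `(1 - D)^{-1/2}` defined by the binomial series `Σ (centralBinom n / 4^n) Dⁿ`
(converging for `‖D‖ < 1`). -/
noncomputable def invSqrtOneSub {X : Type*} [NormedAddCommGroup X] [NormedSpace ℂ X]
    (D : X →L[ℂ] X) : X →L[ℂ] X :=
  ∑' n : ℕ, ((Nat.centralBinom n : ℂ) / 4 ^ n) • D ^ n

/-- Ordered product `f k * f (k-1) * ⋯ * f 1` (equal to `1` for `k = 0`). -/
noncomputable def opProd {α : Type*} [Monoid α] (f : ℕ → α) : ℕ → α
  | 0 => 1
  | k + 1 => f (k + 1) * opProd f k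

/-- `P` is the spectral projection of `L` associated with the peripheral part of the
spectrum (eigenvalues of modulus one). -/
def IsPeripheralProj {X : Type*} [NormedAddCommGroup X] [NormedSpace ℂ X]
    (L P : X →L[ℂ] X) : Prop :=
  P * P = P ∧ L * P = P * L ∧
    (LinearMap.range (P : X →ₗ[ℂ] X) =
      ⨆ z ∈ {z : ℂ | ‖z‖ = 1}, Module.End.maxGenEigenspace (L : X →ₗ[ℂ] X) z) ∧
    (LinearMap.ker (P : X →ₗ[ℂ] X) =
      ⨆ z ∈ {z : ℂ | ‖z‖ ≠ 1}, Module.End.maxGenEigenspace (L : X →ₗ[ℂ] X) z)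

/-- `P` is the spectral projection of `L` associated with the eigenvalue `z`. -/
def IsSpectralProjAt {X : Type*} [NormedAddCommGroup X] [NormedSpace ℂ X]
    (L P : X →L[ℂ] X) (z : ℂ) : Prop :=
  P * P = P ∧ L * P = P * L ∧
    (LinearMap.range (P : X →ₗ[ℂ] X) =
      Module.End.maxGenEigenspace (L : X →ₗ[ℂ] X) z) ∧
    (LinearMap.ker (P : X →ₗ[ℂ] X) =
      ⨆ w ∈ {w : ℂ | w ≠ z}, Module.End.maxGenEigenspace (L : X →ₗ[ℂ] X) w)


attribute [local instance] Matrix.linftyOpNormedAddCommGroup Matrix.linftyOpNormedSpace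
attribute [local instance] Matrix.linftyOpNormedRing Matrix.linftyOpNormedAlgebra


section Helpers

open Polynomial

noncomputable local instance matComplete {n : Type*} [Fintype n] :
    CompleteSpace (Matrix n n ℂ) := FiniteDimensional.complete ℂ _

/-- matrices are determined by traces against all test matrices -/
lemma trace_ext' {n : Type*} [Fintype n] [DecidableEq n] {A B : Matrix n n ℂ}
    (h : ∀ σ : Matrix n n ℂ, (σ * A).trace = (σ * B).trace) : A = B := by
  ext i j
  have := h (Matrix.single j i 1)
  simpa [Matrix.trace, Matrix.diag, Matrix.mul_apply, Matrix.single, ite_and,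
    Finset.sum_ite_eq] using this

lemma trace_ptraceE_mul {n1 n2 : Type*} [Fintype n1] [DecidableEq n1] [Fintype n2]
    [DecidableEq n2] (B : Matrix (n1 × n2) (n1 × n2) ℂ) (C : Matrix n1 n1 ℂ) :
    (ptraceE B * C).trace = (B * (C ⊗ₖ (1 : Matrix n2 n2 ℂ))).trace := by
  simp only [ptraceE, Matrix.trace, Matrix.diag, Matrix.mul_apply, Matrix.of_apply,
    Matrix.kroneckerMap_apply, Matrix.one_apply, Fintype.sum_prod_type, mul_ite, mul_one, mul_zero,
    Finset.sum_ite_eq', Finset.mem_univ, if_true, Finset.sum_mul]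
  exact Finset.sum_congr rfl fun _ _ => Finset.sum_comm

lemma ptraceE_kron {n1 n2 : Type*} [Fintype n2] (A : Matrix n1 n1 ℂ) (B : Matrix n2 n2 ℂ) :
    ptraceE (A ⊗ₖ B) = B.trace • A := by
  ext i j
  simp [ptraceE, Matrix.trace, Matrix.diag, Finset.mul_sum, mul_comm]

lemma kron_conjTranspose {n1 n2 : Type*} (A : Matrix n1 n1 ℂ) (B : Matrix n2 n2 ℂ) :
    (A ⊗ₖ B)ᴴ = Aᴴ ⊗ₖ Bᴴ := by
  ext ⟨i, k⟩ ⟨j, l⟩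
  simp [Matrix.conjTranspose_apply, mul_comm]

lemma commute_aeval' {n : Type*} [Fintype n] [DecidableEq n] {A B : Matrix n n ℂ}
    (h : Commute B A) (p : ℂ[X]) : Commute B (Polynomial.aeval A p) := by
  induction p using Polynomial.induction_on' with
  | add p q hp hq => simpa [map_add] using hp.add_right hq
  | monomial k c =>
      simp only [Polynomial.aeval_monomial]
      exact (Algebra.commute_algebraMap_right c B).mul_right (h.pow_right k)

/-- conjugation by a unitary as an algebra homomorphism -/
noncomputable def conjAlgHom {n : Type*} [Fintype n] [DecidableEq n]
    (V : Matrix n n ℂ) (h1 : V * star V = 1) (h2 : star V * V = 1) :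
    Matrix n n ℂ →ₐ[ℂ] Matrix n n ℂ where
  toFun X := V * X * star V
  map_one' := by simpa using h1
  map_mul' X Y := by
    simp only [Matrix.mul_assoc]
    rw [← Matrix.mul_assoc (star V) V, h2, Matrix.one_mul]
  map_zero' := by simp
  map_add' X Y := by simp [Matrix.mul_add, Matrix.add_mul]
  commutes' r := by
    simp only [Algebra.algebraMap_eq_smul_one, Matrix.mul_smul, Matrix.smul_mul,
      Matrix.mul_one, h1]

lemma conjAlgHom_continuous {n : Type*} [Fintype n] [DecidableEq n]
    (V : Matrix n n ℂ) (h1 : V * star V = 1) (h2 : star V * V = 1) :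
    Continuous (conjAlgHom V h1 h2) :=
  (conjAlgHom V h1 h2).toLinearMap.continuous_of_finiteDimensional

lemma aeval_conj {n : Type*} [Fintype n] [DecidableEq n]
    (V : Matrix n n ℂ) (h1 : V * star V = 1) (h2 : star V * V = 1)
    (X : Matrix n n ℂ) (p : ℂ[X]) :
    Polynomial.aeval (V * X * star V) p = V * Polynomial.aeval X p * star V :=
  Polynomial.aeval_algHom_apply (conjAlgHom V h1 h2) X p

lemma exp_conj_unitary {n : Type*} [Fintype n] [DecidableEq n]
    (V : Matrix n n ℂ) (h1 : V * star V = 1) (h2 : star V * V = 1)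
    (X : Matrix n n ℂ) :
    NormedSpace.exp (V * X * star V) = V * NormedSpace.exp X * star V :=
  (NormedSpace.map_exp (conjAlgHom V h1 h2) (conjAlgHom_continuous V h1 h2) X).symm

lemma aeval_diagonal {n : Type*} [Fintype n] [DecidableEq n] (d : n → ℂ) (p : ℂ[X]) :
    Polynomial.aeval (Matrix.diagonal d) p = Matrix.diagonal (fun i => p.eval (d i)) := by
  have h := Polynomial.aeval_algHom_apply (Matrix.diagonalAlgHom (n := n) (α := ℂ) ℂ) d p
  simp only [Matrix.diagonalAlgHom_apply] at h
  rw [h]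
  have hfun : (Polynomial.aeval d) p = fun i => p.eval (d i) := by
    funext i
    have h2 := Polynomial.aeval_algHom_apply (Pi.evalAlgHom ℂ (fun _ : n => ℂ) i) d p
    simp only [Pi.evalAlgHom_apply] at h2
    rw [← h2, ← Polynomial.coe_aeval_eq_eval]
  rw [hfun]

lemma commute_conj_diagonal {n : Type*} [Fintype n] [DecidableEq n]
    (V : Matrix n n ℂ) (h1 : V * star V = 1) (h2 : star V * V = 1)
    (d g : n → ℂ) (hdg : ∀ i j, d i = d j → g i = g j)
    {B : Matrix n n ℂ} (hB : Commute B (V * Matrix.diagonal d * star V)) :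
    Commute B (V * Matrix.diagonal g * star V) := by
  classical
  set t : ℂ → ℂ := fun z => if h : ∃ i, d i = z then g h.choose else 0 with ht_def
  have ht : ∀ i, t (d i) = g i := by
    intro i
    have hex : ∃ j, d j = d i := ⟨i, rfl⟩
    simp only [ht_def, dif_pos hex]
    exact hdg _ _ hex.choose_spec
  set s : Finset ℂ := Finset.image d Finset.univ with hs_def
  set p : ℂ[X] := Lagrange.interpolate s id t with hp_def
  have hps : ∀ i : n, p.eval (d i) = g i := by
    intro i
    have hmem : d i ∈ s := Finset.mem_image_of_mem d (Finset.mem_univ i)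
    have := Lagrange.eval_interpolate_at_node (v := id) (s := s) t
      (Set.injOn_id _) hmem
    simpa [ht i, hp_def] using this
  have key : Polynomial.aeval (V * Matrix.diagonal d * star V) p
      = V * Matrix.diagonal g * star V := by
    rw [aeval_conj V h1 h2, aeval_diagonal]
    have : (fun i => p.eval (d i)) = g := funext hps
    rw [this]
  exact key ▸ commute_aeval' hB p

/-- `A ↦ A ⊗ₖ 1` as an algebra homomorphism. -/
noncomputable def kronL {n1 n2 : Type*} [Fintype n1] [DecidableEq n1] [Fintype n2]
    [DecidableEq n2] : Matrix n1 n1 ℂ →ₐ[ℂ] Matrix (n1 × n2) (n1 × n2) ℂ where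
  toFun A := A ⊗ₖ (1 : Matrix n2 n2 ℂ)
  map_one' := Matrix.one_kronecker_one
  map_mul' A B := by rw [← Matrix.mul_kronecker_mul, Matrix.one_mul]
  map_zero' := Matrix.zero_kronecker _
  map_add' A B := Matrix.add_kronecker A B _
  commutes' r := by
    simp only [Algebra.algebraMap_eq_smul_one, Matrix.smul_kronecker, Matrix.one_kronecker_one]

/-- `B ↦ 1 ⊗ₖ B` as an algebra homomorphism. -/
noncomputable def kronR {n1 n2 : Type*} [Fintype n1] [DecidableEq n1] [Fintype n2]
    [DecidableEq n2] : Matrix n2 n2 ℂ →ₐ[ℂ] Matrix (n1 × n2) (n1 × n2) ℂ where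
  toFun B := (1 : Matrix n1 n1 ℂ) ⊗ₖ B
  map_one' := Matrix.one_kronecker_one
  map_mul' A B := by rw [← Matrix.mul_kronecker_mul, Matrix.one_mul]
  map_zero' := Matrix.kronecker_zero _
  map_add' A B := Matrix.kronecker_add _ A B
  commutes' r := by
    simp only [Algebra.algebraMap_eq_smul_one, Matrix.kronecker_smul, Matrix.one_kronecker_one]

lemma exp_kron_add {n1 n2 : Type*} [Fintype n1] [DecidableEq n1] [Fintype n2] [DecidableEq n2]
    (A : Matrix n1 n1 ℂ) (B : Matrix n2 n2 ℂ) :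
    NormedSpace.exp (A ⊗ₖ (1 : Matrix n2 n2 ℂ) + (1 : Matrix n1 n1 ℂ) ⊗ₖ B) =
      NormedSpace.exp A ⊗ₖ NormedSpace.exp B := by
  have hL : NormedSpace.exp (A ⊗ₖ (1 : Matrix n2 n2 ℂ)) = NormedSpace.exp A ⊗ₖ 1 :=
    (NormedSpace.map_exp (kronL (n1 := n1) (n2 := n2))
      kronL.toLinearMap.continuous_of_finiteDimensional A).symm
  have hR : NormedSpace.exp ((1 : Matrix n1 n1 ℂ) ⊗ₖ B) = 1 ⊗ₖ NormedSpace.exp B :=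
    (NormedSpace.map_exp (kronR (n1 := n1) (n2 := n2))
      kronR.toLinearMap.continuous_of_finiteDimensional B).symm
  have hcomm : Commute (A ⊗ₖ (1 : Matrix n2 n2 ℂ)) ((1 : Matrix n1 n1 ℂ) ⊗ₖ B) := by
    unfold Commute SemiconjBy
    rw [← Matrix.mul_kronecker_mul, ← Matrix.mul_kronecker_mul, Matrix.one_mul, Matrix.mul_one,
      Matrix.one_mul, Matrix.mul_one]
  rw [Matrix.exp_add_of_commute _ _ hcomm, hL, hR,
    ← Matrix.mul_kronecker_mul, Matrix.mul_one, Matrix.one_mul]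

lemma unitary_mul_star {n : Type*} [Fintype n] [DecidableEq n] {A : Matrix n n ℂ}
    (hA : A.IsHermitian) :
    (hA.eigenvectorUnitary : Matrix n n ℂ) * star (hA.eigenvectorUnitary : Matrix n n ℂ) = 1 :=
  Matrix.mem_unitaryGroup_iff.mp hA.eigenvectorUnitary.2

lemma star_mul_unitary {n : Type*} [Fintype n] [DecidableEq n] {A : Matrix n n ℂ}
    (hA : A.IsHermitian) :
    star (hA.eigenvectorUnitary : Matrix n n ℂ) * (hA.eigenvectorUnitary : Matrix n n ℂ) = 1 :=
  Matrix.mem_unitaryGroup_iff'.mp hA.eigenvectorUnitary.2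

lemma spectral_theorem' {n : Type*} [Fintype n] [DecidableEq n] {A : Matrix n n ℂ}
    (hA : A.IsHermitian) :
    A = (hA.eigenvectorUnitary : Matrix n n ℂ) * Matrix.diagonal (RCLike.ofReal ∘ hA.eigenvalues) *
      star (hA.eigenvectorUnitary : Matrix n n ℂ) := by
  have h := hA.spectral_theorem
  rwa [Unitary.conjStarAlgAut_apply] at h

open scoped MatrixOrder in
lemma psd_sqrt_eq_cfc {n : Type*} [Fintype n] [DecidableEq n] {A : Matrix n n ℂ}
    (hA : A.PosSemidef) : hA.sqrt = CFC.sqrt A := by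
  rw [CFC.sqrt_eq_cfc, cfc_nnreal_eq_real _ A, hA.1.cfc_eq]
  simp only [IsHermitian.cfc, Unitary.conjStarAlgAut_apply, Matrix.PosSemidef.sqrt]
  congr 3
  funext i
  simp [hA.eigenvalues_nonneg i]

open scoped MatrixOrder in
lemma psd_sqrt_mul_self {n : Type*} [Fintype n] [DecidableEq n] {A : Matrix n n ℂ}
    (hA : A.PosSemidef) : hA.sqrt * hA.sqrt = A := by
  rw [psd_sqrt_eq_cfc]
  exact CFC.sqrt_mul_sqrt_self A hA.nonneg

open scoped MatrixOrder in
lemma psd_posSemidef_sqrt {n : Type*} [Fintype n] [DecidableEq n] {A : Matrix n n ℂ}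
    (hA : A.PosSemidef) : hA.sqrt.PosSemidef := by
  rw [psd_sqrt_eq_cfc]
  exact (CFC.sqrt_nonneg A).posSemidef

open scoped MatrixOrder in
lemma psd_sqrt_unique {n : Type*} [Fintype n] [DecidableEq n] {A B : Matrix n n ℂ}
    (hA : A.PosSemidef) (hB : B.PosSemidef) (h : B * B = A) : hA.sqrt = B := by
  rw [psd_sqrt_eq_cfc]
  exact CFC.sqrt_unique h hB.nonneg

lemma smul_hermitian_spectral {n : Type*} [Fintype n] [DecidableEq n] {A : Matrix n n ℂ}
    (hA : A.IsHermitian) (c : ℂ) :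
    c • A = (hA.eigenvectorUnitary : Matrix n n ℂ) *
      Matrix.diagonal (fun i => c * (hA.eigenvalues i : ℂ)) *
      star (hA.eigenvectorUnitary : Matrix n n ℂ) := by
  conv_lhs => rw [spectral_theorem' hA]
  have hd : Matrix.diagonal (fun i => c * (hA.eigenvalues i : ℂ))
      = c • Matrix.diagonal (RCLike.ofReal ∘ hA.eigenvalues) := by
    rw [← Matrix.diagonal_smul]
    congr 1
  rw [hd, mul_smul_comm, smul_mul_assoc]

lemma exp_smul_hermitian {n : Type*} [Fintype n] [DecidableEq n] {A : Matrix n n ℂ}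
    (hA : A.IsHermitian) (c : ℂ) :
    NormedSpace.exp (c • A) = (hA.eigenvectorUnitary : Matrix n n ℂ) *
      Matrix.diagonal (fun i => Complex.exp (c * (hA.eigenvalues i : ℂ))) *
      star (hA.eigenvectorUnitary : Matrix n n ℂ) := by
  rw [smul_hermitian_spectral hA c,
    exp_conj_unitary _ (unitary_mul_star hA) (star_mul_unitary hA),
    Matrix.exp_diagonal, Pi.exp_def, Complex.exp_eq_exp_ℂ]

lemma trace_conj_unitary {n : Type*} [Fintype n] [DecidableEq n]
    (V : Matrix n n ℂ) (h2 : star V * V = 1) (X : Matrix n n ℂ) :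
    (V * X * star V).trace = X.trace := by
  rw [Matrix.trace_mul_comm, ← Matrix.mul_assoc, h2, Matrix.one_mul]

lemma trace_exp_smul {n : Type*} [Fintype n] [DecidableEq n] {h : Matrix n n ℂ}
    (hh : h.IsHermitian) (β : ℝ) :
    (NormedSpace.exp ((-β : ℂ) • h)).trace
      = ((∑ i, Real.exp (-β * hh.eigenvalues i) : ℝ) : ℂ) := by
  rw [exp_smul_hermitian hh, trace_conj_unitary _ (star_mul_unitary hh),
    Matrix.trace_diagonal]
  rw [Complex.ofReal_sum]
  refine Finset.sum_congr rfl fun i _ => ?_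
  rw [Complex.ofReal_exp]
  norm_num

lemma trace_exp_pos {n : Type*} [Fintype n] [DecidableEq n] [Nonempty n] {h : Matrix n n ℂ}
    (hh : h.IsHermitian) (β : ℝ) :
    (0 : ℝ) < ∑ i, Real.exp (-β * hh.eigenvalues i) :=
  Finset.sum_pos (fun i _ => Real.exp_pos _) Finset.univ_nonempty

lemma exp_eq_trace_smul_gibbs {n : Type*} [Fintype n] [DecidableEq n] [Nonempty n]
    {h : Matrix n n ℂ} (hh : h.IsHermitian) (β : ℝ) :
    NormedSpace.exp ((-β : ℂ) • h)
      = (NormedSpace.exp ((-β : ℂ) • h)).trace • gibbs β h := by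
  have hZ : (NormedSpace.exp ((-β : ℂ) • h)).trace ≠ 0 := by
    rw [trace_exp_smul hh]
    exact_mod_cast (trace_exp_pos hh β).ne'
  rw [gibbs, smul_smul, mul_inv_cancel₀ hZ, one_smul]

lemma gibbs_trace_one {n : Type*} [Fintype n] [DecidableEq n] [Nonempty n]
    {h : Matrix n n ℂ} (hh : h.IsHermitian) (β : ℝ) : (gibbs β h).trace = 1 := by
  have hZ : (NormedSpace.exp ((-β : ℂ) • h)).trace ≠ 0 := by
    rw [trace_exp_smul hh]
    exact_mod_cast (trace_exp_pos hh β).ne'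
  rw [gibbs, Matrix.trace_smul, smul_eq_mul, inv_mul_cancel₀ hZ]

lemma hermitian_smul_real {n : Type*} [Fintype n] [DecidableEq n] {A : Matrix n n ℂ}
    (hA : A.IsHermitian) (r : ℝ) : ((r : ℂ) • A).IsHermitian := by
  unfold Matrix.IsHermitian
  rw [Matrix.conjTranspose_smul, hA.eq]
  congr 1
  simp [Complex.star_def, Complex.conj_ofReal]

lemma gibbs_posSemidef {n : Type*} [Fintype n] [DecidableEq n] [Nonempty n]
    {h : Matrix n n ℂ} (hh : h.IsHermitian) (β : ℝ) : (gibbs β h).PosSemidef := by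
  set Z : ℝ := ∑ i, Real.exp (-β * hh.eigenvalues i) with hZdef
  have hZpos : (0 : ℝ) < Z := trace_exp_pos hh β
  set c : ℂ := ((-(β/2) : ℝ) : ℂ) with hcdef
  set F : Matrix n n ℂ := NormedSpace.exp (c • h) with hFdef
  have hFh : F.IsHermitian := Matrix.IsHermitian.exp (hermitian_smul_real hh _)
  have hsum : (-β : ℂ) • h = c • h + c • h := by
    rw [← add_smul]
    congr 1
    rw [hcdef]
    push_cast
    ring
  have hE : NormedSpace.exp ((-β : ℂ) • h) = F * F := by
    rw [hsum, Matrix.exp_add_of_commute _ _ (Commute.refl _)]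
  set a : ℂ := ((Real.sqrt Z⁻¹ : ℝ) : ℂ) with hadef
  set G : Matrix n n ℂ := a • F with hGdef
  have hGG : Gᴴ * G = gibbs β h := by
    rw [hGdef, Matrix.conjTranspose_smul, hFh.eq, Matrix.smul_mul, Matrix.mul_smul,
      smul_smul, gibbs, ← hE, trace_exp_smul hh, ← hZdef]
    congr 1
    rw [hadef]
    rw [Complex.star_def, Complex.conj_ofReal, ← Complex.ofReal_mul,
      Real.mul_self_sqrt (inv_nonneg.mpr hZpos.le), Complex.ofReal_inv]
  exact hGG ▸ Matrix.posSemidef_conjTranspose_mul_self G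

/-- exp of a "skew" multiple of a Hermitian matrix is unitary -/
lemma exp_skew_unitary {n : Type*} [Fintype n] [DecidableEq n] {H : Matrix n n ℂ}
    (hH : H.IsHermitian) (c : ℂ) (hc : star c = -c) :
    NormedSpace.exp (c • H) * (NormedSpace.exp (c • H))ᴴ = 1 ∧
      (NormedSpace.exp (c • H))ᴴ * NormedSpace.exp (c • H) = 1 := by
  have hconj : (NormedSpace.exp (c • H))ᴴ = NormedSpace.exp ((-c) • H) := by
    rw [← Matrix.exp_conjTranspose, Matrix.conjTranspose_smul, hH.eq, hc]
  have hcomm : Commute (c • H) ((-c) • H) := by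
    unfold Commute SemiconjBy
    rw [smul_mul_smul_comm, smul_mul_smul_comm, mul_comm]
  constructor
  · rw [hconj, ← Matrix.exp_add_of_commute _ _ hcomm]
    simp [← add_smul, NormedSpace.exp_zero]
  · rw [hconj, ← Matrix.exp_add_of_commute _ _ hcomm.symm]
    simp [← add_smul, NormedSpace.exp_zero]

lemma conj_diag_real_hermitian {n : Type*} [Fintype n] [DecidableEq n]
    (V : Matrix n n ℂ) (r : n → ℝ) :
    (V * Matrix.diagonal (fun i => (r i : ℂ)) * star V).IsHermitian := by
  unfold Matrix.IsHermitian
  rw [Matrix.conjTranspose_mul, Matrix.conjTranspose_mul, Matrix.diagonal_conjTranspose,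
    ← Matrix.star_eq_conjTranspose V, ← Matrix.star_eq_conjTranspose (star V), star_star,
    Matrix.mul_assoc]
  have hs : (star fun i => ((r i : ℂ))) = fun i => ((r i : ℂ)) := by
    funext i
    simp [Complex.star_def, Complex.conj_ofReal]
  rw [hs, ← Matrix.mul_assoc]

lemma hlog_posDef_eq {n : Type*} [Fintype n] [DecidableEq n] {A : Matrix n n ℂ}
    (hA : A.PosDef) :
    hlog A = (hA.1.eigenvectorUnitary : Matrix n n ℂ) *
      Matrix.diagonal (fun i => (Real.log (hA.1.eigenvalues i) : ℂ)) *
      star (hA.1.eigenvectorUnitary : Matrix n n ℂ) := by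
  rw [hlog, dif_pos hA.1]

lemma exp_hlog {n : Type*} [Fintype n] [DecidableEq n] {A : Matrix n n ℂ} (hA : A.PosDef) :
    NormedSpace.exp (hlog A) = A := by
  rw [hlog_posDef_eq hA,
    exp_conj_unitary _ (unitary_mul_star hA.1) (star_mul_unitary hA.1),
    Matrix.exp_diagonal, Pi.exp_def]
  conv_rhs => rw [spectral_theorem' hA.1]
  have hfun : (fun i => NormedSpace.exp ((Real.log (hA.1.eigenvalues i) : ℂ)))
      = fun i => ((hA.1.eigenvalues i : ℝ) : ℂ) := by
    funext i
    rw [← Complex.exp_eq_exp_ℂ, ← Complex.ofReal_exp, Real.exp_log (hA.eigenvalues_pos i)]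
  rw [hfun]
  rfl

lemma kron_posSemidef {n1 n2 : Type*} [Fintype n1] [DecidableEq n1] [Fintype n2] [DecidableEq n2]
    {A : Matrix n1 n1 ℂ} {B : Matrix n2 n2 ℂ} (hA : A.PosSemidef) (hB : B.PosSemidef) :
    (A ⊗ₖ B).PosSemidef := by
  exact hA.kronecker hB

end Helpers


/-- **Characterization of the vanishing of `X(s)`** (Lemma 5.5): at a fixed value of `s`,
for the ADRIS data with irreducible reduced dynamics `L` and (faithful) invariant state
`ρ^inv`, one has `X = U(ρ^inv ⊗ ξ)U* - ρ^inv ⊗ ξ = 0` if and only if there is a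
self-adjoint `K_S` on `H_S` with `[K_S ⊗ Id + Id ⊗ h_E, U] = 0`; moreover in that case
the detailed balance relation
`(ρ^inv)^{1/2} L*((ρ^inv)^{-1/2} ρ (ρ^inv)^{-1/2}) (ρ^inv)^{1/2} = Tr_E(U*(ρ ⊗ ξ)U)`
holds for every `ρ`. -/
theorem vanishing_X_detailed_balance
    {nS nE : Type*} [Fintype nS] [DecidableEq nS] [Nonempty nS]
    [Fintype nE] [DecidableEq nE] [Nonempty nE]
    (hS : Matrix nS nS ℂ) (hhS : hS.IsHermitian)
    (hE : Matrix nE nE ℂ) (hhE : hE.IsHermitian)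
    (β : ℝ) (hβ : 0 < β)
    (v : Matrix (nS × nE) (nS × nE) ℂ) (hv : v.IsHermitian)
    (τ lam : ℝ) (hτ : 0 < τ)
    (ξ : Matrix nE nE ℂ) (hξ : ξ = gibbs β hE)
    (U : Matrix (nS × nE) (nS × nE) ℂ)
    (hU : U = NormedSpace.exp ((-(Complex.I) * (τ : ℂ)) •
      (hS ⊗ₖ (1 : Matrix nE nE ℂ) + (1 : Matrix nS nS ℂ) ⊗ₖ hE + (lam : ℂ) • v)))
    (L : Matrix nS nS ℂ →L[ℂ] Matrix nS nS ℂ)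
    (hL : ∀ ρ, L ρ = ptraceE (U * (ρ ⊗ₖ ξ) * Uᴴ))
    (hirr : IsIrreducible (fun ρ => L ρ))
    (ρinv : Matrix nS nS ℂ) (hρinv_faith : IsFaithfulState ρinv)
    (hρinv_inv : L ρinv = ρinv)
    (hρinv_uniq : ∀ ρ, IsState ρ → L ρ = ρ → ρ = ρinv)
    -- the adjoint of `L` with respect to the trace duality
    (Ladj : Matrix nS nS ℂ →L[ℂ] Matrix nS nS ℂ)
    (hLadj : ∀ ρ A, ((L ρ) * A).trace = (ρ * (Ladj A)).trace) :
    (U * (ρinv ⊗ₖ ξ) * Uᴴ - ρinv ⊗ₖ ξ = 0 ↔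
      ∃ K : Matrix nS nS ℂ, K.IsHermitian ∧
        (K ⊗ₖ (1 : Matrix nE nE ℂ) + (1 : Matrix nS nS ℂ) ⊗ₖ hE) * U =
          U * (K ⊗ₖ (1 : Matrix nE nE ℂ) + (1 : Matrix nS nS ℂ) ⊗ₖ hE)) ∧
    (U * (ρinv ⊗ₖ ξ) * Uᴴ - ρinv ⊗ₖ ξ = 0 →
      ∀ ρ : Matrix nS nS ℂ,
        (hρinv_faith.1.posSemidef.sqrt) *
            Ladj ((hρinv_faith.1.posSemidef.sqrt)⁻¹ * ρ *
              (hρinv_faith.1.posSemidef.sqrt)⁻¹) *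
            (hρinv_faith.1.posSemidef.sqrt) =
          ptraceE (Uᴴ * (ρ ⊗ₖ ξ) * U)) := by
  classical
  -- the total Hamiltonian is Hermitian, hence `U` is unitary
  have hHt : (hS ⊗ₖ (1 : Matrix nE nE ℂ) + (1 : Matrix nS nS ℂ) ⊗ₖ hE
      + (lam : ℂ) • v).IsHermitian := by
    have h1 : (hS ⊗ₖ (1 : Matrix nE nE ℂ))ᴴ = hS ⊗ₖ 1 := by
      rw [kron_conjTranspose, hhS.eq, Matrix.conjTranspose_one]
    have h2 : ((1 : Matrix nS nS ℂ) ⊗ₖ hE)ᴴ = 1 ⊗ₖ hE := by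
      rw [kron_conjTranspose, hhE.eq, Matrix.conjTranspose_one]
    have h3 : (((lam : ℂ)) • v)ᴴ = (lam : ℂ) • v := hermitian_smul_real hv lam
    unfold Matrix.IsHermitian
    rw [Matrix.conjTranspose_add, Matrix.conjTranspose_add, h1, h2, h3]
  have hUUH : U * Uᴴ = 1 ∧ Uᴴ * U = 1 := by
    have hc : star (-(Complex.I) * (τ : ℂ)) = -(-(Complex.I) * (τ : ℂ)) := by
      rw [star_mul', star_neg, Complex.star_def, Complex.conj_I, Complex.conj_ofReal]
      ring
    rw [hU]
    exact exp_skew_unitary hHt _ hc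
  have hξtr : ξ.trace = 1 := by rw [hξ]; exact gibbs_trace_one hhE β
  have hMUof : (U * (ρinv ⊗ₖ ξ) * Uᴴ - ρinv ⊗ₖ ξ = 0) → Commute U (ρinv ⊗ₖ ξ) := by
    intro hX
    have h0 : U * (ρinv ⊗ₖ ξ) * Uᴴ = ρinv ⊗ₖ ξ := sub_eq_zero.mp hX
    unfold Commute SemiconjBy
    calc U * (ρinv ⊗ₖ ξ) = U * (ρinv ⊗ₖ ξ) * (Uᴴ * U) := by rw [hUUH.2, Matrix.mul_one]
      _ = U * (ρinv ⊗ₖ ξ) * Uᴴ * U := by rw [Matrix.mul_assoc (U * (ρinv ⊗ₖ ξ))]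
      _ = (ρinv ⊗ₖ ξ) * U := by rw [h0]
  refine ⟨⟨?_, ?_⟩, ?_⟩
  · -- X = 0 implies existence of K
    intro hX
    have hMU := hMUof hX
    have hρpd := hρinv_faith.1
    have hlogh : (hlog ρinv).IsHermitian := by
      rw [hlog_posDef_eq hρpd]; exact conj_diag_real_hermitian _ _
    set G := hlog ρinv ⊗ₖ (1 : Matrix nE nE ℂ) + (1 : Matrix nS nS ℂ) ⊗ₖ ((-β : ℂ) • hE)
      with hGdef
    have hEsmul : ((-β : ℂ) • hE).IsHermitian := by
      unfold Matrix.IsHermitian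
      rw [Matrix.conjTranspose_smul, hhE.eq]
      congr 1
      simp [Complex.star_def, Complex.conj_ofReal]
    have hGh : G.IsHermitian := by
      unfold Matrix.IsHermitian
      rw [hGdef, Matrix.conjTranspose_add, kron_conjTranspose, kron_conjTranspose,
        hlogh.eq, Matrix.conjTranspose_one, hEsmul.eq, Matrix.conjTranspose_one]
    have hexpG : NormedSpace.exp G
        = (NormedSpace.exp ((-β : ℂ) • hE)).trace • (ρinv ⊗ₖ ξ) := by
      rw [hGdef, exp_kron_add, exp_hlog hρpd]
      conv_lhs => rw [exp_eq_trace_smul_gibbs hhE β]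
      rw [← hξ, Matrix.kronecker_smul]
    have hUexpG : Commute U (NormedSpace.exp G) := by
      rw [hexpG]; exact hMU.smul_right _
    have hUG : Commute U G := by
      have hB : Commute U ((hGh.eigenvectorUnitary : Matrix (nS × nE) (nS × nE) ℂ) *
          Matrix.diagonal (fun i => Complex.exp (1 * (hGh.eigenvalues i : ℂ))) *
          star (hGh.eigenvectorUnitary : Matrix (nS × nE) (nS × nE) ℂ)) := by
        rw [← exp_smul_hermitian hGh 1, one_smul]; exact hUexpG
      have hcompat : ∀ i j, Complex.exp (1 * (hGh.eigenvalues i : ℂ))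
          = Complex.exp (1 * (hGh.eigenvalues j : ℂ)) →
          ((RCLike.ofReal ∘ hGh.eigenvalues : _ → ℂ)) i
            = ((RCLike.ofReal ∘ hGh.eigenvalues : _ → ℂ)) j := by
        intro i j hij
        simp only [one_mul] at hij
        have habs := congrArg norm hij
        simp only [Complex.norm_exp, Complex.ofReal_re] at habs
        have heq : hGh.eigenvalues i = hGh.eigenvalues j := Real.exp_injective habs
        simp [Function.comp, heq]
      have hres := commute_conj_diagonal _ (unitary_mul_star hGh) (star_mul_unitary hGh)
        _ _ hcompat hB
      rwa [← spectral_theorem' hGh] at hres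
    refine ⟨((-β⁻¹ : ℝ) : ℂ) • hlog ρinv, hermitian_smul_real hlogh _, ?_⟩
    have hone : (((-β⁻¹ : ℝ) : ℂ) * (-β : ℂ)) = 1 := by
      push_cast
      field_simp
    have hKG : ((((-β⁻¹ : ℝ) : ℂ) • hlog ρinv) ⊗ₖ (1 : Matrix nE nE ℂ)
        + (1 : Matrix nS nS ℂ) ⊗ₖ hE) = ((-β⁻¹ : ℝ) : ℂ) • G := by
      rw [hGdef, smul_add, Matrix.smul_kronecker, Matrix.kronecker_smul, smul_smul, hone,
        one_smul]
    rw [hKG]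
    exact ((hUG.smul_right (((-β⁻¹ : ℝ) : ℂ))).symm).eq
  · -- existence of K implies X = 0
    rintro ⟨K, hK, hcomm⟩
    set W := K ⊗ₖ (1 : Matrix nE nE ℂ) + (1 : Matrix nS nS ℂ) ⊗ₖ hE with hWdef
    have hUW : Commute U W := hcomm.symm
    have hexpW : Commute U (NormedSpace.exp ((-β : ℂ) • W)) :=
      (hUW.smul_right _).exp_right
    have hsplit : (-β : ℂ) • W
        = ((-β : ℂ) • K) ⊗ₖ (1 : Matrix nE nE ℂ) + (1 : Matrix nS nS ℂ) ⊗ₖ ((-β : ℂ) • hE) := by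
      rw [hWdef, smul_add, Matrix.smul_kronecker, Matrix.kronecker_smul]
    have hexpWval : NormedSpace.exp ((-β : ℂ) • W)
        = ((NormedSpace.exp ((-β : ℂ) • K)).trace * (NormedSpace.exp ((-β : ℂ) • hE)).trace)
          • (gibbs β K ⊗ₖ ξ) := by
      rw [hsplit, exp_kron_add]
      conv_lhs => rw [exp_eq_trace_smul_gibbs hK β, exp_eq_trace_smul_gibbs hhE β]
      rw [← hξ, Matrix.smul_kronecker, Matrix.kronecker_smul, smul_smul]
    have hzK : (NormedSpace.exp ((-β : ℂ) • K)).trace ≠ 0 := by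
      rw [trace_exp_smul hK]
      exact_mod_cast (trace_exp_pos hK β).ne'
    have hzE : (NormedSpace.exp ((-β : ℂ) • hE)).trace ≠ 0 := by
      rw [trace_exp_smul hhE]
      exact_mod_cast (trace_exp_pos hhE β).ne'
    have hUρξ : Commute U (gibbs β K ⊗ₖ ξ) := by
      have h2 := hexpW
      rw [hexpWval] at h2
      have h3 : ((NormedSpace.exp ((-β : ℂ) • K)).trace
            * (NormedSpace.exp ((-β : ℂ) • hE)).trace)
          • (U * (gibbs β K ⊗ₖ ξ))
          = ((NormedSpace.exp ((-β : ℂ) • K)).trace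
            * (NormedSpace.exp ((-β : ℂ) • hE)).trace)
          • ((gibbs β K ⊗ₖ ξ) * U) := by
        have := h2.eq
        rw [Matrix.mul_smul, Matrix.smul_mul] at this
        exact this
      exact smul_right_injective _ (mul_ne_zero hzK hzE) h3
    have hfix : U * (gibbs β K ⊗ₖ ξ) * Uᴴ = gibbs β K ⊗ₖ ξ := by
      rw [hUρξ.eq, Matrix.mul_assoc, hUUH.1, Matrix.mul_one]
    have hLfix : L (gibbs β K) = gibbs β K := by
      rw [hL, hfix, ptraceE_kron, hξtr, one_smul]
    have hstate : IsState (gibbs β K) := ⟨gibbs_posSemidef hK β, gibbs_trace_one hK β⟩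
    have huniq : gibbs β K = ρinv := hρinv_uniq _ hstate hLfix
    rw [← huniq, sub_eq_zero]
    exact hfix
  · -- detailed balance
    intro hX ρ
    have hMU := hMUof hX
    set r : Matrix nS nS ℂ := hρinv_faith.1.posSemidef.sqrt with hrdef
    have hr2 : r * r = ρinv := psd_sqrt_mul_self _
    have hrps : r.PosSemidef := psd_posSemidef_sqrt _
    have hdetρ : ρinv.det ≠ 0 := hρinv_faith.1.det_pos.ne'
    have hdetr : r.det ≠ 0 := by
      intro h0
      apply hdetρ
      rw [← hr2, Matrix.det_mul, h0, mul_zero]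
    have hrinv1 : r⁻¹ * r = 1 := Matrix.nonsing_inv_mul r (isUnit_iff_ne_zero.mpr hdetr)
    have hrinv2 : r * r⁻¹ = 1 := Matrix.mul_nonsing_inv r (isUnit_iff_ne_zero.mpr hdetr)
    have hξps : ξ.PosSemidef := by rw [hξ]; exact gibbs_posSemidef hhE β
    set ss : Matrix nE nE ℂ := hξps.sqrt with hssdef
    have hs2 : ss * ss = ξ := psd_sqrt_mul_self _
    have hssps : ss.PosSemidef := psd_posSemidef_sqrt _
    have hMps : (ρinv ⊗ₖ ξ).PosSemidef := kron_posSemidef hρinv_faith.1.posSemidef hξps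
    have hrsps : (r ⊗ₖ ss).PosSemidef := kron_posSemidef hrps hssps
    have hrssq : (r ⊗ₖ ss) * (r ⊗ₖ ss) = ρinv ⊗ₖ ξ := by
      rw [← Matrix.mul_kronecker_mul, hr2, hs2]
    have hsqrtM : hMps.sqrt = r ⊗ₖ ss :=
      psd_sqrt_unique hMps hrsps hrssq
    have hUsq : Commute U (r ⊗ₖ ss) := by
      have hB : Commute U ((hMps.1.eigenvectorUnitary : Matrix (nS × nE) (nS × nE) ℂ) *
          Matrix.diagonal (RCLike.ofReal ∘ hMps.1.eigenvalues) *
          star (hMps.1.eigenvectorUnitary : Matrix (nS × nE) (nS × nE) ℂ)) := by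
        rw [← spectral_theorem' hMps.1]; exact hMU
      have hcompat : ∀ i j, ((RCLike.ofReal ∘ hMps.1.eigenvalues : _ → ℂ)) i
          = ((RCLike.ofReal ∘ hMps.1.eigenvalues : _ → ℂ)) j →
          ((RCLike.ofReal ∘ Real.sqrt ∘ hMps.1.eigenvalues : _ → ℂ)) i
            = ((RCLike.ofReal ∘ Real.sqrt ∘ hMps.1.eigenvalues : _ → ℂ)) j := by
        intro i j hij
        simp only [Function.comp_apply] at hij ⊢
        have : hMps.1.eigenvalues i = hMps.1.eigenvalues j := by exact_mod_cast hij
        rw [this]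
      have hres := commute_conj_diagonal _ (unitary_mul_star hMps.1) (star_mul_unitary hMps.1)
        _ _ hcompat hB
      have hsq_form : hMps.sqrt
          = (hMps.1.eigenvectorUnitary : Matrix (nS × nE) (nS × nE) ℂ) *
            Matrix.diagonal (RCLike.ofReal ∘ Real.sqrt ∘ hMps.1.eigenvalues) *
            star (hMps.1.eigenvectorUnitary : Matrix (nS × nE) (nS × nE) ℂ) := rfl
      rwa [← hsq_form, hsqrtM] at hres
    have hUHsq : Commute Uᴴ (r ⊗ₖ ss) := by
      unfold Commute SemiconjBy
      have := congrArg Matrix.conjTranspose hUsq.eq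
      rw [Matrix.conjTranspose_mul, Matrix.conjTranspose_mul, hrsps.1.eq] at this
      exact this.symm
    apply trace_ext'
    intro σ
    -- left-hand side
    have lhs1 : (σ * ((hρinv_faith.1.posSemidef.sqrt) *
          Ladj ((hρinv_faith.1.posSemidef.sqrt)⁻¹ * ρ * (hρinv_faith.1.posSemidef.sqrt)⁻¹) *
          (hρinv_faith.1.posSemidef.sqrt))).trace
        = ((r * σ * r) * Ladj (r⁻¹ * ρ * r⁻¹)).trace := by
      rw [← hrdef]
      simp only [← Matrix.mul_assoc]
      rw [Matrix.trace_mul_comm]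
      simp only [← Matrix.mul_assoc]
    have lhs2 : ((r * σ * r) * Ladj (r⁻¹ * ρ * r⁻¹)).trace
        = ((U * ((r * σ * r) ⊗ₖ ξ) * Uᴴ) * ((r⁻¹ * ρ * r⁻¹) ⊗ₖ (1 : Matrix nE nE ℂ))).trace := by
      rw [← hLadj, hL, trace_ptraceE_mul]
    have hk1 : (r ⊗ₖ ss) * (σ ⊗ₖ (1 : Matrix nE nE ℂ)) * (r ⊗ₖ ss) = (r * σ * r) ⊗ₖ ξ := by
      rw [← Matrix.mul_kronecker_mul, ← Matrix.mul_kronecker_mul, Matrix.mul_one, hs2]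
    have hk2 : (r ⊗ₖ ss) * ((r⁻¹ * ρ * r⁻¹) ⊗ₖ (1 : Matrix nE nE ℂ)) * (r ⊗ₖ ss)
        = ρ ⊗ₖ ξ := by
      rw [← Matrix.mul_kronecker_mul, ← Matrix.mul_kronecker_mul, Matrix.mul_one, hs2]
      have hmid : r * (r⁻¹ * ρ * r⁻¹) * r = ρ := by
        calc r * (r⁻¹ * ρ * r⁻¹) * r = (r * r⁻¹) * ρ * (r⁻¹ * r) := by
              simp only [Matrix.mul_assoc]
          _ = ρ := by rw [hrinv2, hrinv1, Matrix.one_mul, Matrix.mul_one]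
      rw [hmid]
    have lhs3 : ((U * ((r * σ * r) ⊗ₖ ξ) * Uᴴ)
          * ((r⁻¹ * ρ * r⁻¹) ⊗ₖ (1 : Matrix nE nE ℂ))).trace
        = ((U * (σ ⊗ₖ (1 : Matrix nE nE ℂ)) * Uᴴ) * (ρ ⊗ₖ ξ)).trace := by
      rw [← hk1]
      have hmove : U * ((r ⊗ₖ ss) * (σ ⊗ₖ (1 : Matrix nE nE ℂ)) * (r ⊗ₖ ss)) * Uᴴ
          = (r ⊗ₖ ss) * (U * (σ ⊗ₖ (1 : Matrix nE nE ℂ)) * Uᴴ) * (r ⊗ₖ ss) := by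
        calc U * ((r ⊗ₖ ss) * (σ ⊗ₖ (1 : Matrix nE nE ℂ)) * (r ⊗ₖ ss)) * Uᴴ
            = (U * (r ⊗ₖ ss)) * (σ ⊗ₖ (1 : Matrix nE nE ℂ)) * ((r ⊗ₖ ss) * Uᴴ) := by
              simp only [Matrix.mul_assoc]
          _ = ((r ⊗ₖ ss) * U) * (σ ⊗ₖ (1 : Matrix nE nE ℂ)) * (Uᴴ * (r ⊗ₖ ss)) := by
              rw [hUsq.eq, hUHsq.eq]
          _ = (r ⊗ₖ ss) * (U * (σ ⊗ₖ (1 : Matrix nE nE ℂ)) * Uᴴ) * (r ⊗ₖ ss) := by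
              simp only [Matrix.mul_assoc]
      rw [hmove, ← hk2]
      simp only [Matrix.mul_assoc]
      rw [Matrix.trace_mul_comm]
      simp only [Matrix.mul_assoc]
    -- right-hand side
    have rhs1 : (σ * ptraceE (Uᴴ * (ρ ⊗ₖ ξ) * U)).trace
        = ((U * (σ ⊗ₖ (1 : Matrix nE nE ℂ)) * Uᴴ) * (ρ ⊗ₖ ξ)).trace := by
      rw [Matrix.trace_mul_comm, trace_ptraceE_mul]
      calc ((Uᴴ * (ρ ⊗ₖ ξ) * U) * (σ ⊗ₖ (1 : Matrix nE nE ℂ))).trace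
          = (Uᴴ * ((ρ ⊗ₖ ξ) * U * (σ ⊗ₖ (1 : Matrix nE nE ℂ)))).trace := by
            simp only [Matrix.mul_assoc]
        _ = (((ρ ⊗ₖ ξ) * U * (σ ⊗ₖ (1 : Matrix nE nE ℂ))) * Uᴴ).trace := by
            rw [Matrix.trace_mul_comm]
        _ = ((ρ ⊗ₖ ξ) * (U * (σ ⊗ₖ (1 : Matrix nE nE ℂ)) * Uᴴ)).trace := by
            simp only [Matrix.mul_assoc]
        _ = ((U * (σ ⊗ₖ (1 : Matrix nE nE ℂ)) * Uᴴ) * (ρ ⊗ₖ ξ)).trace := by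
            rw [Matrix.trace_mul_comm]
    rw [lhs1, lhs2, lhs3, rhs1]

end RISPaper
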